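/- Let μ be a partition with all parts ≥ 2 and |μ| = k ≥ 2, let n ≥ k, and let I be a perfect matching of Fin (2n). Let π be a permutation of Fin (2n) whose nontrivial orbit sizes form the multiset of parts of μ, and let τ be the partition with all parts ≥ 2 such that d(I, π I π⁻¹) = 2(τ, 1^{n−|τ|}). Then |τ| ≤ k, and if |τ| = k then τ = μ. -/

import Mathlib

set_option linter.unusedSectionVars false
set_option maxHeartbeats 1000000

/-- The multiset of cardinalities of the orbits of a subgroup of permutations
acting on a finite type. -/
noncomputable def orbitSizes {α : Type*} [Fintype α] (G : Subgroup (Equiv.Perm α)) :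
    Multiset ℕ :=
  letI : Fintype (Quotient (MulAction.orbitRel G α)) := Fintype.ofFinite _
  (Finset.univ : Finset (Quotient (MulAction.orbitRel G α))).val.map
    fun q => Nat.card (MulAction.orbit G q.out)

/-- `d(A,B)`. -/
noncomputable def dMatch {N : ℕ} (A B : Equiv.Perm (Fin N)) : Multiset ℕ :=
  orbitSizes (Subgroup.closure {A, B})

/-- The multiset of sizes of the orbits of the cyclic group generated by a
permutation (the cycle type, counting fixed points as parts equal to 1). -/
noncomputable def permOrbitSizes {N : ℕ} (π : Equiv.Perm (Fin N)) : Multiset ℕ :=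
  orbitSizes (Subgroup.zpowers π)

/-- Doubling every part of a partition (as a multiset). -/
def twice (m : Multiset ℕ) : Multiset ℕ := m.map (fun i => 2 * i)

/-- Perfect matchings of the complete graph on `Fin N`. -/
abbrev PerfMatching (N : ℕ) := {A : Equiv.Perm (Fin N) // A * A = 1 ∧ ∀ x, A x ≠ x}

section Helpers

open MulAction Subgroup Equiv

variable {α : Type*} [Fintype α] [DecidableEq α]

lemma mem_orbit_zpowers_iff' {σ : Perm α} {x y : α} :
    y ∈ MulAction.orbit (Subgroup.zpowers σ) x ↔ ∃ m : ℤ, (σ ^ m) x = y := by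
  constructor
  · rintro ⟨⟨c, m, rfl⟩, rfl⟩; exact ⟨m, rfl⟩
  · rintro ⟨m, rfl⟩; exact ⟨⟨σ ^ m, m, rfl⟩, rfl⟩

lemma orbit_zpowers_card_eq_one_iff {σ : Perm α} {x : α} :
    Nat.card (MulAction.orbit (Subgroup.zpowers σ) x) = 1 ↔ σ x = x := by
  rw [Nat.card_coe_set_eq]
  constructor
  · intro h
    obtain ⟨a, ha⟩ := Set.ncard_eq_one.mp h
    have hx : x ∈ MulAction.orbit (Subgroup.zpowers σ) x := MulAction.mem_orbit_self x
    have hs : σ x ∈ MulAction.orbit (Subgroup.zpowers σ) x :=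
      mem_orbit_zpowers_iff'.mpr ⟨1, by simp⟩
    rw [ha] at hx hs
    simp only [Set.mem_singleton_iff] at hx hs
    rw [hs, hx]
  · intro h
    have h2 : MulAction.orbit (Subgroup.zpowers σ) x = {x} := by
      apply Set.eq_singleton_iff_unique_mem.mpr
      refine ⟨MulAction.mem_orbit_self x, ?_⟩
      rintro y hy
      obtain ⟨m, rfl⟩ := mem_orbit_zpowers_iff'.mp hy
      exact σ.zpow_apply_eq_self_of_apply_eq_self h m
    rw [h2, Set.ncard_singleton]

lemma orbit_card_pos (H : Subgroup (Perm α)) (x : α) :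
    0 < Nat.card (MulAction.orbit H x) := by
  have : Nonempty (MulAction.orbit H x) := ⟨⟨x, MulAction.mem_orbit_self x⟩⟩
  exact Nat.card_pos

lemma two_le_orbit_card_iff {σ : Perm α} {x : α} :
    2 ≤ Nat.card (MulAction.orbit (Subgroup.zpowers σ) x) ↔ σ x ≠ x := by
  have h1 := orbit_card_pos (Subgroup.zpowers σ) x
  rw [Ne, ← orbit_zpowers_card_eq_one_iff (σ := σ) (x := x)]
  omega

lemma filter_orbitSizes_sum (H : Subgroup (Perm α)) (P : ℕ → Prop) [DecidablePred P] :
    ((orbitSizes H).filter P).sum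
      = (Finset.univ.filter fun x : α => P (Nat.card (MulAction.orbit H x))).card := by
  classical
  letI : Fintype (Quotient (MulAction.orbitRel H α)) := Fintype.ofFinite _
  set f : α → Quotient (MulAction.orbitRel H α) := fun x => Quotient.mk _ x with hf
  have hmem : ∀ (x : α) (q : Quotient (MulAction.orbitRel H α)),
      f x = q ↔ x ∈ MulAction.orbit H q.out := by
    intro x q
    constructor
    · intro h
      have h2 : (Quotient.mk _ x : Quotient (MulAction.orbitRel H α)) = Quotient.mk _ q.out := by
        rw [Quotient.out_eq]; exact h
      exact MulAction.orbitRel_apply.mp (Quotient.exact h2)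
    · intro h
      rw [hf]
      show Quotient.mk _ x = q
      rw [← q.out_eq]
      exact Quotient.sound (MulAction.orbitRel_apply.mpr h)
  have key : ∀ (x : α) (q : Quotient (MulAction.orbitRel H α)), f x = q →
      MulAction.orbit H q.out = MulAction.orbit H x := fun x q h =>
    (MulAction.orbit_eq_iff.mpr ((hmem x q).mp h)).symm
  have e1 : ((orbitSizes H).filter P).sum
      = ∑ q ∈ (Finset.univ.filter fun q : Quotient (MulAction.orbitRel H α) =>
          P (Nat.card (MulAction.orbit H q.out))), Nat.card (MulAction.orbit H q.out) := by
    rw [orbitSizes, Multiset.filter_map, Finset.sum]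
    rw [Finset.filter_val]
    rfl
  rw [e1]
  rw [Finset.card_eq_sum_card_fiberwise (f := f)
    (t := Finset.univ.filter fun q : Quotient (MulAction.orbitRel H α) =>
        P (Nat.card (MulAction.orbit H q.out)))
    (by intro x hx
        simp only [Finset.mem_coe, Finset.mem_filter, Finset.mem_univ, true_and] at hx ⊢
        rw [key x (f x) rfl]; exact hx)]
  apply Finset.sum_congr rfl
  intro q hq
  simp only [Finset.mem_filter, Finset.mem_univ, true_and] at hq
  have h1 : (Finset.filter (fun a => f a = q)
      (Finset.univ.filter fun x : α => P (Nat.card (MulAction.orbit H x))))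
      = Finset.univ.filter (fun a : α => f a = q) := by
    ext a
    simp only [Finset.mem_filter, Finset.mem_univ, true_and]
    constructor
    · exact fun h => h.2
    · intro h
      refine ⟨?_, h⟩
      rw [← key a q h]; exact hq
  rw [h1]
  have h2 : Finset.univ.filter (fun a : α => f a = q)
      = (MulAction.orbit H q.out).toFinset := by
    ext a
    simp only [Finset.mem_filter, Finset.mem_univ, true_and, Set.mem_toFinset]
    exact hmem a q
  rw [h2, Nat.card_coe_set_eq, Set.ncard_eq_toFinset_card']

lemma orbit_closure_pair_card (A B : Perm α) (hA : A * A = 1) (hB : B * B = 1)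
    (hA' : ∀ x, A x ≠ x) (hB' : ∀ x, B x ≠ x) (x : α) :
    Nat.card (MulAction.orbit (Subgroup.closure {A, B}) x)
      = 2 * Nat.card (MulAction.orbit (Subgroup.zpowers (A * B)) x) := by
  classical
  have hAinv : A⁻¹ = A := inv_eq_of_mul_eq_one_right hA
  have hBinv : B⁻¹ = B := inv_eq_of_mul_eq_one_right hB
  set g : Perm α := A * B with hg
  have hBAg : B = A * g := by rw [hg, ← mul_assoc, hA, one_mul]
  have hconj : ∀ m : ℤ, A * g ^ m = g ^ (-m) * A := by
    intro m
    have h1 : A * g * A⁻¹ = g⁻¹ := by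
      rw [hg, hAinv]
      rw [show A * (A * B) * A = A * A * B * A by group, hA, one_mul]
      rw [mul_inv_rev, hAinv, hBinv]
    have h2 : A * g ^ m * A⁻¹ = g ^ (-m) := by
      have h3 := map_zpow (MulAut.conj A) g m
      simp only [MulAut.conj_apply] at h3
      rw [h3, h1, inv_zpow, zpow_neg]
    calc A * g ^ m = (A * g ^ m * A⁻¹) * A := by group
    _ = g ^ (-m) * A := by rw [h2]
  have happ : ∀ (m : ℤ) (y : α), A ((g ^ m) y) = (g ^ (-m)) (A y) := by
    intro m y
    have := congrArg (fun σ : Perm α => σ y) (hconj m)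
    simpa using this
  set O1 : Set α := MulAction.orbit (Subgroup.zpowers g) x with hO1
  set O2 : Set α := MulAction.orbit (Subgroup.zpowers g) (A x) with hO2
  set U : Set α := O1 ∪ O2 with hU
  have hAU : Set.MapsTo (⇑A) U U := by
    rintro y (hy | hy)
    · obtain ⟨m, rfl⟩ := mem_orbit_zpowers_iff'.mp hy
      right; rw [happ]; exact mem_orbit_zpowers_iff'.mpr ⟨-m, rfl⟩
    · obtain ⟨m, rfl⟩ := mem_orbit_zpowers_iff'.mp hy
      left; rw [happ]
      have hAA : A (A x) = x := by
        have := congrArg (fun σ : Perm α => σ x) hA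
        simpa using this
      rw [hAA]
      exact mem_orbit_zpowers_iff'.mpr ⟨-m, rfl⟩
  have hgU : Set.MapsTo (⇑g) U U := by
    rintro y (hy | hy)
    · obtain ⟨m, rfl⟩ := mem_orbit_zpowers_iff'.mp hy
      left
      refine mem_orbit_zpowers_iff'.mpr ⟨1 + m, ?_⟩
      rw [zpow_add, zpow_one, Equiv.Perm.mul_apply]
    · obtain ⟨m, rfl⟩ := mem_orbit_zpowers_iff'.mp hy
      right
      refine mem_orbit_zpowers_iff'.mpr ⟨1 + m, ?_⟩
      rw [zpow_add, zpow_one, Equiv.Perm.mul_apply]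
  have hBU : Set.MapsTo (⇑B) U U := by
    intro y hy
    have hBy : B y = A (g y) := by rw [hBAg]; rfl
    rw [hBy]
    exact hAU (hgU hy)
  have hinv : ∀ c : Perm α, Set.MapsTo (⇑c) U U → Set.MapsTo (⇑c⁻¹) U U := by
    intro c hc
    have himg : c '' U = U :=
      Set.eq_of_subset_of_ncard_le (Set.image_subset_iff.mpr fun y hy => hc hy)
        (by rw [Set.ncard_image_of_injective _ c.injective]) (Set.toFinite U)
    intro y hy
    rw [← himg] at hy
    obtain ⟨z, hz, rfl⟩ := hy
    simpa using hz
  have hclos : ∀ c ∈ Subgroup.closure ({A, B} : Set (Perm α)), Set.MapsTo (⇑c) U U := by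
    intro c hc
    induction hc using Subgroup.closure_induction with
    | mem y hy =>
      rcases hy with rfl | rfl
      · exact hAU
      · exact hBU
    | one => simpa using Set.mapsTo_id U
    | mul y z _ _ hy hz => exact fun w hw => hy (hz hw)
    | inv y _ hy => exact hinv y hy
  have hxU : x ∈ U := Or.inl (MulAction.mem_orbit_self x)
  have horb : MulAction.orbit (Subgroup.closure ({A, B} : Set (Perm α))) x = U := by
    apply Set.Subset.antisymm
    · rintro y ⟨⟨c, hc⟩, rfl⟩
      exact hclos c hc hxU
    · have hgmem : g ∈ Subgroup.closure ({A, B} : Set (Perm α)) :=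
        Subgroup.mul_mem _ (Subgroup.subset_closure (by simp))
          (Subgroup.subset_closure (by simp))
      have hAmem : A ∈ Subgroup.closure ({A, B} : Set (Perm α)) :=
        Subgroup.subset_closure (by simp)
      rintro y (hy | hy)
      · obtain ⟨m, rfl⟩ := mem_orbit_zpowers_iff'.mp hy
        exact ⟨⟨g ^ m, Subgroup.zpow_mem _ hgmem m⟩, rfl⟩
      · obtain ⟨m, rfl⟩ := mem_orbit_zpowers_iff'.mp hy
        exact ⟨⟨g ^ m * A, Subgroup.mul_mem _ (Subgroup.zpow_mem _ hgmem m) hAmem⟩, rfl⟩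
  have h1 : ∀ (c d : ℤ) (y : α), (g ^ c) ((g ^ d) y) = (g ^ (c + d)) y := by
    intro c d y; rw [zpow_add]; rfl
  have hdisj : Disjoint O1 O2 := by
    rw [Set.disjoint_left]
    rintro y hy1 hy2
    obtain ⟨a, rfl⟩ := mem_orbit_zpowers_iff'.mp hy1
    obtain ⟨b, hb⟩ := mem_orbit_zpowers_iff'.mp hy2
    have hAx : A x = (g ^ (a - b)) x := by
      have h : (g ^ (-b)) ((g ^ b) (A x)) = (g ^ (a - b)) x := by
        rw [hb, h1, show -b + a = a - b by ring]
      rw [← h, h1, show -b + b = (0:ℤ) by ring, zpow_zero]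
      rfl
    rcases Int.even_or_odd (a - b) with ⟨m, hm⟩ | ⟨m, hm⟩
    · apply hA' ((g ^ m) x)
      rw [happ, hAx, h1, hm, show -m + (m + m) = m by ring]
    · apply hB' ((g ^ m) x)
      have hBm : B ((g ^ m) x) = A ((g ^ (1 + m)) x) := by
        rw [hBAg, Equiv.Perm.mul_apply,
          show (g ^ (1 + m)) x = g ((g ^ m) x) by rw [zpow_add, zpow_one]; rfl]
      rw [hBm, happ, hAx, h1, hm, show -(1 + m) + (2 * m + 1) = m by ring]
  have himg : O2 = A '' O1 := by
    ext y
    constructor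
    · intro hy
      obtain ⟨m, rfl⟩ := mem_orbit_zpowers_iff'.mp hy
      exact ⟨(g ^ (-m)) x, mem_orbit_zpowers_iff'.mpr ⟨-m, rfl⟩, by rw [happ, neg_neg]⟩
    · rintro ⟨z, hz, rfl⟩
      obtain ⟨m, rfl⟩ := mem_orbit_zpowers_iff'.mp hz
      rw [happ]
      exact mem_orbit_zpowers_iff'.mpr ⟨-m, rfl⟩
  rw [horb, Nat.card_coe_set_eq, Nat.card_coe_set_eq, hU,
    Set.ncard_union_eq hdisj (Set.toFinite _) (Set.toFinite _), himg,
    Set.ncard_image_of_injective _ A.injective]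
  ring

lemma orbit_mul_right_fixed {σ t : Perm α} (h : Commute σ t) {x : α} (hx : t x = x) :
    MulAction.orbit (Subgroup.zpowers (σ * t)) x = MulAction.orbit (Subgroup.zpowers σ) x := by
  have key : ∀ m : ℤ, ((σ * t) ^ m) x = (σ ^ m) x := by
    intro m
    rw [h.mul_zpow, Equiv.Perm.mul_apply, t.zpow_apply_eq_self_of_apply_eq_self hx]
  ext y
  rw [mem_orbit_zpowers_iff', mem_orbit_zpowers_iff']
  exact exists_congr fun m => by rw [key m]

lemma orbit_zpowers_inv (σ : Perm α) (x : α) :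
    MulAction.orbit (Subgroup.zpowers σ⁻¹) x = MulAction.orbit (Subgroup.zpowers σ) x := by
  ext y
  rw [mem_orbit_zpowers_iff', mem_orbit_zpowers_iff']
  constructor
  · rintro ⟨m, rfl⟩; exact ⟨-m, by rw [zpow_neg, inv_zpow]⟩
  · rintro ⟨m, rfl⟩; exact ⟨-m, by rw [zpow_neg, inv_zpow, inv_inv]⟩

lemma conj_zpow_apply {I_ π : Perm α} (hI : I_ * I_ = 1) (m : ℤ) (x : α) :
    ((I_ * π * I_) ^ m) x = I_ ((π ^ m) (I_ x)) := by
  have hIinv : I_⁻¹ = I_ := inv_eq_of_mul_eq_one_right hI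
  have h3 := map_zpow (MulAut.conj I_) π m
  simp only [MulAut.conj_apply, hIinv] at h3
  rw [← h3]
  rfl

lemma orbit_conj {I_ : Perm α} (π : Perm α) (hI : I_ * I_ = 1) (x : α) :
    MulAction.orbit (Subgroup.zpowers (I_ * π * I_)) x
      = I_ '' MulAction.orbit (Subgroup.zpowers π) (I_ x) := by
  ext y
  rw [mem_orbit_zpowers_iff']
  constructor
  · rintro ⟨m, rfl⟩
    exact ⟨(π ^ m) (I_ x), mem_orbit_zpowers_iff'.mpr ⟨m, rfl⟩, (conj_zpow_apply hI m x).symm⟩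
  · rintro ⟨z, hz, rfl⟩
    obtain ⟨m, rfl⟩ := mem_orbit_zpowers_iff'.mp hz
    exact ⟨m, conj_zpow_apply hI m x⟩

lemma card_filter_comp_equiv (e : Perm α) (p : α → Prop) [DecidablePred p] :
    (Finset.univ.filter fun x => p (e x)).card = (Finset.univ.filter p).card := by
  classical
  have h : (Finset.univ.filter fun x => p (e x))
      = (Finset.univ.filter p).map ⟨e.symm, e.symm.injective⟩ := by
    ext x
    simp only [Finset.mem_filter, Finset.mem_univ, true_and, Finset.mem_map,
      Function.Embedding.coeFn_mk]
    constructor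
    · intro hx; exact ⟨e x, hx, e.symm_apply_apply x⟩
    · rintro ⟨y, hy, rfl⟩
      rwa [e.apply_symm_apply]
  rw [h, Finset.card_map]

lemma filter_two_le (M : Multiset ℕ) (hM : ∀ i ∈ M, 2 ≤ i) (r : ℕ) :
    (M + Multiset.replicate r 1).filter (fun i => 2 ≤ i) = M := by
  rw [Multiset.filter_add, Multiset.filter_eq_self.mpr hM,
    Multiset.filter_eq_nil.mpr, add_zero]
  intro a ha
  rw [Multiset.eq_of_mem_replicate ha]
  omega

lemma sum_filter_eq_count_mul (M : Multiset ℕ) (s : ℕ) :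
    (M.filter (fun i => i = s)).sum = M.count s * s := by
  rw [Multiset.filter_eq', Multiset.sum_replicate, smul_eq_mul]

end Helpers

lemma sum_map_two_mul (M : Multiset ℕ) : (M.map (fun i => 2 * i)).sum = 2 * M.sum := by
  induction M using Multiset.induction_on with
  | empty => simp
  | cons a s ih => simp [Multiset.map_cons, Multiset.sum_cons, ih, mul_add]

theorem d_conj_bound (μ : Multiset ℕ) (hμ : ∀ i ∈ μ, 2 ≤ i)
    (k n : ℕ) (hk : μ.sum = k) (hk2 : 2 ≤ k) (hn : k ≤ n)
    (I : PerfMatching (2 * n)) (π : Equiv.Perm (Fin (2 * n)))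
    (hπ : permOrbitSizes π = μ + Multiset.replicate (2 * n - k) 1)
    (τ : Multiset ℕ) (hτ : ∀ i ∈ τ, 2 ≤ i) (hτn : τ.sum ≤ n)
    (hd : dMatch I.1 (π * I.1 * π⁻¹) = twice (τ + Multiset.replicate (n - τ.sum) 1)) :
    τ.sum ≤ k ∧ (τ.sum = k → τ = μ) := by
  set Ip := I.1 with hIpdef
  have hI1 : Ip * Ip = 1 := I.2.1
  have hI2 : ∀ x, Ip x ≠ x := I.2.2
  have hII : ∀ x, Ip (Ip x) = x := by
    intro x
    have := congrArg (fun σ : Equiv.Perm (Fin (2*n)) => σ x) hI1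
    simpa using this
  set B' := π * Ip * π⁻¹ with hB'def
  have hB1 : B' * B' = 1 := by
    rw [hB'def, show π * Ip * π⁻¹ * (π * Ip * π⁻¹) = π * (Ip * Ip) * π⁻¹ by group, hI1]
    group
  have hB2 : ∀ x, B' x ≠ x := by
    intro x h
    rw [hB'def] at h
    have h2 : Ip (π⁻¹ x) = π⁻¹ x := by
      have := congrArg (fun y => π⁻¹ y) h
      simpa [Equiv.Perm.mul_apply] using this
    exact hI2 _ h2
  have hd' : orbitSizes (Subgroup.closure {Ip, B'})
      = twice (τ + Multiset.replicate (n - τ.sum) 1) := hd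
  have hπ' : orbitSizes (Subgroup.zpowers π) = μ + Multiset.replicate (2 * n - k) 1 := hπ
  have hLB := orbit_closure_pair_card Ip B' hI1 hB1 hI2 hB2
  -- the support of π has k elements
  have hS1 : (Finset.univ.filter fun x : Fin (2*n) => π x ≠ x).card = k := by
    have e := filter_orbitSizes_sum (Subgroup.zpowers π) (fun i => 2 ≤ i)
    rw [hπ', filter_two_le μ hμ _, hk] at e
    have hfc : (Finset.univ.filter fun x : Fin (2*n) =>
        2 ≤ Nat.card (MulAction.orbit (Subgroup.zpowers π) x))
        = Finset.univ.filter fun x : Fin (2*n) => π x ≠ x :=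
      Finset.filter_congr (fun x _ => by rw [two_le_orbit_card_iff])
    rw [hfc] at e
    exact e.symm
  have hS2 : (Finset.univ.filter fun x : Fin (2*n) => π (Ip x) ≠ Ip x).card
      = (Finset.univ.filter fun x : Fin (2*n) => π x ≠ x).card :=
    card_filter_comp_equiv Ip (fun y => π y ≠ y)
  -- the number of points moved by I * B' is 2 * τ.sum
  have hBig : (Finset.univ.filter fun x : Fin (2*n) => (Ip * B') x ≠ x).card = 2 * τ.sum := by
    have e := filter_orbitSizes_sum (Subgroup.closure {Ip, B'}) (fun i => 4 ≤ i)
    rw [hd'] at e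
    have l1 : ((twice (τ + Multiset.replicate (n - τ.sum) 1)).filter (fun i => 4 ≤ i)).sum
        = 2 * τ.sum := by
      rw [twice, Multiset.filter_map]
      have hcong : Multiset.filter ((fun i => 4 ≤ i) ∘ fun i => 2 * i)
          (τ + Multiset.replicate (n - τ.sum) 1)
          = Multiset.filter (fun i => 2 ≤ i) (τ + Multiset.replicate (n - τ.sum) 1) :=
        Multiset.filter_congr (fun x _ => by simp only [Function.comp]; omega)
      rw [hcong, filter_two_le τ hτ _, sum_map_two_mul]
    rw [l1] at e
    have hfc : (Finset.univ.filter fun x : Fin (2*n) =>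
        4 ≤ Nat.card (MulAction.orbit (Subgroup.closure {Ip, B'}) x))
        = Finset.univ.filter fun x : Fin (2*n) => (Ip * B') x ≠ x :=
      Finset.filter_congr (fun x _ => by
        rw [hLB x, ← two_le_orbit_card_iff (σ := Ip * B') (x := x)]
        omega)
    rw [hfc] at e
    exact e.symm
  -- the moved points of Ip * B' lie in supp π ∪ Ip '' supp π
  have hsub : (Finset.univ.filter fun x : Fin (2*n) => (Ip * B') x ≠ x)
      ⊆ (Finset.univ.filter fun x : Fin (2*n) => π x ≠ x)
        ∪ (Finset.univ.filter fun x : Fin (2*n) => π (Ip x) ≠ Ip x) := by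
    intro x hx
    simp only [Finset.mem_filter, Finset.mem_union, Finset.mem_univ, true_and] at hx ⊢
    by_contra hcon
    push_neg at hcon
    obtain ⟨h1, h2⟩ := hcon
    apply hx
    have hπinv : π⁻¹ x = x := by
      have := congrArg (fun y => π⁻¹ y) h1
      simpa using this.symm
    show (Ip * B') x = x
    rw [hB'def]
    simp only [Equiv.Perm.mul_apply]
    rw [hπinv, h2, hII]
  have hcle := Finset.card_le_card hsub
  have hule := Finset.card_union_le (Finset.univ.filter fun x : Fin (2*n) => π x ≠ x)
    (Finset.univ.filter fun x : Fin (2*n) => π (Ip x) ≠ Ip x)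
  rw [hBig] at hcle
  rw [Finset.union_comm] at hcle
  have hcle' : 2 * τ.sum ≤ ((Finset.univ.filter fun x : Fin (2*n) => π x ≠ x)
      ∪ (Finset.univ.filter fun x : Fin (2*n) => π (Ip x) ≠ Ip x)).card := by
    rw [Finset.union_comm] at hcle; exact hcle
  refine ⟨by omega, ?_⟩
  intro heq
  -- equality case
  have hinter : ((Finset.univ.filter fun x : Fin (2*n) => π x ≠ x)
      ∩ (Finset.univ.filter fun x : Fin (2*n) => π (Ip x) ≠ Ip x)).card = 0 := by
    have h5 := Finset.card_union_add_card_inter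
      (Finset.univ.filter fun x : Fin (2*n) => π x ≠ x)
      (Finset.univ.filter fun x : Fin (2*n) => π (Ip x) ≠ Ip x)
    omega
  have hdisj2 : ∀ x : Fin (2*n), π x = x ∨ π (Ip x) = Ip x := by
    intro x
    by_contra hc
    push_neg at hc
    have hxmem : x ∈ (Finset.univ.filter fun x : Fin (2*n) => π x ≠ x)
        ∩ (Finset.univ.filter fun x : Fin (2*n) => π (Ip x) ≠ Ip x) :=
      Finset.mem_inter.mpr ⟨by simp [hc.1], by simp [hc.2]⟩
    rw [Finset.card_eq_zero] at hinter
    rw [hinter] at hxmem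
    exact absurd hxmem (Finset.notMem_empty x)
  set σ₁ := Ip * π * Ip with hσ₁def
  have hσ₁fix : ∀ x : Fin (2*n), π (Ip x) = Ip x → σ₁ x = x := by
    intro x h
    rw [hσ₁def]
    simp only [Equiv.Perm.mul_apply]
    rw [h, hII]
  have hPD : σ₁.Disjoint π⁻¹ := by
    intro x
    rcases hdisj2 x with h | h
    · right
      have := congrArg (fun y => π⁻¹ y) h
      simpa using this.symm
    · left
      exact hσ₁fix x h
  have hcomm : Commute σ₁ π⁻¹ := hPD.commute
  have hgfact : Ip * B' = σ₁ * π⁻¹ := by rw [hB'def, hσ₁def]; group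
  have hfg1 : ∀ x : Fin (2*n), π x = x →
      MulAction.orbit (Subgroup.zpowers (Ip * B')) x
        = MulAction.orbit (Subgroup.zpowers σ₁) x := by
    intro x hx
    rw [hgfact]
    apply orbit_mul_right_fixed hcomm
    have := congrArg (fun y => π⁻¹ y) hx
    simpa using this.symm
  have hfg2 : ∀ x : Fin (2*n), σ₁ x = x →
      MulAction.orbit (Subgroup.zpowers (Ip * B')) x
        = MulAction.orbit (Subgroup.zpowers π) x := by
    intro x hx
    rw [hgfact, hcomm.eq, orbit_mul_right_fixed hcomm.symm hx, orbit_zpowers_inv]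
  have hfconj : ∀ x : Fin (2*n),
      Nat.card (MulAction.orbit (Subgroup.zpowers σ₁) x)
        = Nat.card (MulAction.orbit (Subgroup.zpowers π) (Ip x)) := by
    intro x
    rw [hσ₁def, orbit_conj π hI1 x, Nat.card_coe_set_eq, Nat.card_coe_set_eq,
      Set.ncard_image_of_injective _ Ip.injective]
  have hcount : ∀ s : ℕ, 2 ≤ s → τ.count s = μ.count s := by
    intro s hs
    have eg := filter_orbitSizes_sum (Subgroup.zpowers (Ip * B')) (fun i => i = s)
    have eG := filter_orbitSizes_sum (Subgroup.closure {Ip, B'}) (fun i => i = 2 * s)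
    have eπ := filter_orbitSizes_sum (Subgroup.zpowers π) (fun i => i = s)
    have eσ := filter_orbitSizes_sum (Subgroup.zpowers σ₁) (fun i => i = s)
    rw [sum_filter_eq_count_mul] at eg eG eπ eσ
    have hset1 : (Finset.univ.filter fun x : Fin (2*n) =>
        Nat.card (MulAction.orbit (Subgroup.closure {Ip, B'}) x) = 2 * s)
        = Finset.univ.filter fun x : Fin (2*n) =>
          Nat.card (MulAction.orbit (Subgroup.zpowers (Ip * B')) x) = s :=
      Finset.filter_congr (fun x _ => by rw [hLB x]; omega)
    rw [hset1] at eG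
    have hcG : (orbitSizes (Subgroup.closure {Ip, B'})).count (2*s) = τ.count s := by
      rw [hd', twice]
      have h6 := Multiset.count_map_eq_count' (fun i : ℕ => 2 * i)
        (τ + Multiset.replicate (n - τ.sum) 1) (fun a b hab => by simp only at hab; omega) s
      rw [h6, Multiset.count_add, Multiset.count_replicate, if_neg (by omega), add_zero]
    have hsetg : (Finset.univ.filter fun x : Fin (2*n) =>
        Nat.card (MulAction.orbit (Subgroup.zpowers (Ip * B')) x) = s)
        = (Finset.univ.filter fun x : Fin (2*n) =>
            Nat.card (MulAction.orbit (Subgroup.zpowers σ₁) x) = s)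
          ∪ (Finset.univ.filter fun x : Fin (2*n) =>
            Nat.card (MulAction.orbit (Subgroup.zpowers π) x) = s) := by
      ext x
      simp only [Finset.mem_filter, Finset.mem_union, Finset.mem_univ, true_and]
      constructor
      · intro hx
        rcases hPD x with h | h
        · right; rw [← hfg2 x h]; exact hx
        · have hπx : π x = x := by
            have := congrArg (fun y => π y) h
            simpa using this.symm
          left; rw [← hfg1 x hπx]; exact hx
      · rintro (hx | hx)
        · have hσx : σ₁ x ≠ x := by rw [← two_le_orbit_card_iff]; omega
          have hπix : π⁻¹ x = x := (hPD x).resolve_left hσx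
          have hπx : π x = x := by
            have := congrArg (fun y => π y) hπix
            simpa using this.symm
          rw [hfg1 x hπx]; exact hx
        · have hπx : π x ≠ x := by rw [← two_le_orbit_card_iff]; omega
          have hσx : σ₁ x = x := by
            rcases hPD x with h | h
            · exact h
            · exfalso
              apply hπx
              have := congrArg (fun y => π y) h
              simpa using this.symm
          rw [hfg2 x hσx]; exact hx
    have hdisjfs : Disjoint
        (Finset.univ.filter fun x : Fin (2*n) =>
          Nat.card (MulAction.orbit (Subgroup.zpowers σ₁) x) = s)
        (Finset.univ.filter fun x : Fin (2*n) =>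
          Nat.card (MulAction.orbit (Subgroup.zpowers π) x) = s) := by
      rw [Finset.disjoint_left]
      intro x hx1 hx2
      simp only [Finset.mem_filter, Finset.mem_univ, true_and] at hx1 hx2
      have hσx : σ₁ x ≠ x := by rw [← two_le_orbit_card_iff]; omega
      have hπix : π⁻¹ x = x := (hPD x).resolve_left hσx
      have hπx : π x = x := by
        have := congrArg (fun y => π y) hπix
        simpa using this.symm
      have h7 : Nat.card (MulAction.orbit (Subgroup.zpowers π) x) = 1 :=
        orbit_zpowers_card_eq_one_iff.mpr hπx
      omega
    have hcardσπ : (Finset.univ.filter fun x : Fin (2*n) =>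
          Nat.card (MulAction.orbit (Subgroup.zpowers σ₁) x) = s).card
        = (Finset.univ.filter fun x : Fin (2*n) =>
          Nat.card (MulAction.orbit (Subgroup.zpowers π) x) = s).card := by
      have hc : (Finset.univ.filter fun x : Fin (2*n) =>
          Nat.card (MulAction.orbit (Subgroup.zpowers σ₁) x) = s)
          = Finset.univ.filter fun x : Fin (2*n) =>
          Nat.card (MulAction.orbit (Subgroup.zpowers π) (Ip x)) = s :=
        Finset.filter_congr (fun x _ => by rw [hfconj x])
      rw [hc]
      exact card_filter_comp_equiv Ip
        (fun y => Nat.card (MulAction.orbit (Subgroup.zpowers π) y) = s)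
    have hcπ : (orbitSizes (Subgroup.zpowers π)).count s = μ.count s := by
      rw [hπ', Multiset.count_add, Multiset.count_replicate, if_neg (by omega), add_zero]
    have hcardsum := congrArg Finset.card hsetg
    rw [Finset.card_union_of_disjoint hdisjfs] at hcardsum
    -- final arithmetic
    rw [hcG] at eG
    rw [hcπ] at eπ
    rw [hcardσπ] at hcardsum
    have hfin : τ.count s * (2 * s) = 2 * (μ.count s * s) := by
      rw [eG, hcardsum, ← eπ]
      ring
    have hfin' : 2 * (τ.count s * s) = 2 * (μ.count s * s) := by rw [← hfin]; ring
    have hfin2 := Nat.eq_of_mul_eq_mul_left (by norm_num) hfin'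
    exact Nat.eq_of_mul_eq_mul_right (by omega) hfin2
  apply Multiset.ext.mpr
  intro s
  by_cases hs : 2 ≤ s
  · exact hcount s hs
  · rw [Multiset.count_eq_zero_of_notMem (fun h => hs (hτ s h)),
      Multiset.count_eq_zero_of_notMem (fun h => hs (hμ s h))]
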